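/- For words x and y in the alphabet of positive integers, u_x(λ) = u_y(λ) for every partition λ if and only if w(x) = w(y) and α(x) = α(y), where w_i counts occurrences of the letter i and α_i(x) = max over suffixes x̃ of x of (w_{i+1}(x̃) − w_i(x̃)). -/

import Mathlib

/-- A partition, represented by its column lengths (the conjugate):
`c i` is the number of boxes in column `i`. -/
def IsPartition (c : ℕ+ → ℕ) : Prop :=
  (∀ i : ℕ+, c (i + 1) ≤ c i) ∧ ∃ N : ℕ+, ∀ i : ℕ+, N ≤ i → c i = 0

open Classical in
/-- The Schur operator `u_i`: add a box to column `i` if the result is a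
partition, else `none` (representing `0`). -/
noncomputable def addBox (i : ℕ+) (c : ℕ+ → ℕ) : Option (ℕ+ → ℕ) :=
  if IsPartition (Function.update c i (c i + 1)) then
    some (Function.update c i (c i + 1))
  else none

/-- `u_x = u_{x_1} ∘ ⋯ ∘ u_{x_l}` for a word `x = x_1 ⋯ x_l`. -/
noncomputable def schurWord (x : List ℕ+) (c : ℕ+ → ℕ) : Option (ℕ+ → ℕ) :=
  x.foldr (fun i o => o.bind (addBox i)) (some c)

/-- `α_i(x)`: the maximum over suffixes `s` of `x` of `w_{i+1}(s) - w_i(s)`. -/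
def alpha (i : ℕ+) (x : List ℕ+) : ℕ :=
  (x.tails.map (fun s => s.count (i + 1) - s.count i)).foldr max 0
/- auxiliary lemmas -/

lemma le_foldr_max {l : List ℕ} {a : ℕ} (h : a ∈ l) : a ≤ l.foldr max 0 := by
  induction l with
  | nil => simp at h
  | cons b t ih =>
    rcases List.mem_cons.mp h with rfl | h
    · exact le_max_left _ _
    · exact le_trans (ih h) (le_max_right _ _)

lemma foldr_max_eq_zero {l : List ℕ} (h : ∀ a ∈ l, a = 0) : l.foldr max 0 = 0 := by
  induction l with
  | nil => rfl
  | cons b t ih =>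
    simp only [List.foldr_cons]
    rw [h b List.mem_cons_self, ih (fun a ha => h a (List.mem_cons_of_mem _ ha))]
    simp

lemma alpha_nil (i : ℕ+) : alpha i [] = 0 := by simp [alpha]

lemma alpha_cons (i a : ℕ+) (x : List ℕ+) :
    alpha i (a :: x) = max ((a :: x).count (i+1) - (a :: x).count i) (alpha i x) := by
  simp [alpha, List.tails_cons]

lemma count_sub_le_alpha (i : ℕ+) (x : List ℕ+) :
    x.count (i+1) - x.count i ≤ alpha i x := by
  apply le_foldr_max
  exact List.mem_map_of_mem (by simp)

lemma exists_count_bound (x : List ℕ+) : ∃ N : ℕ+, ∀ j : ℕ+, N ≤ j → x.count j = 0 := by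
  induction x with
  | nil => exact ⟨1, fun j _ => rfl⟩
  | cons a t ih =>
    obtain ⟨N, hN⟩ := ih
    refine ⟨max N (a+1), fun j hj => ?_⟩
    have h1 := hN j (le_trans (le_max_left _ _) hj)
    have h2 : a + 1 ≤ j := le_trans (le_max_right _ _) hj
    have h3 : a ≠ j := by
      intro h; subst h
      have := (PNat.coe_le_coe _ _).mpr h2
      push_cast at this
      omega
    simp [List.count_cons, h1, h3]

lemma alpha_eq_zero_of_count {i : ℕ+} {x : List ℕ+} (h : x.count (i+1) = 0) :
    alpha i x = 0 := by
  apply foldr_max_eq_zero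
  intro a ha
  obtain ⟨s, hs, rfl⟩ := List.mem_map.mp ha
  have hsuf : s <:+ x := by simpa using hs
  have hsub : s.count (i+1) ≤ x.count (i+1) := hsuf.sublist.count_le _
  omega

lemma exists_bound (x : List ℕ+) :
    ∃ N : ℕ+, ∀ j : ℕ+, N ≤ j → x.count j = 0 ∧ alpha j x = 0 := by
  obtain ⟨N, hN⟩ := exists_count_bound x
  refine ⟨N, fun j hj => ⟨hN j hj, alpha_eq_zero_of_count (hN (j+1) (le_trans hj (by
    exact le_of_lt (PNat.lt_add_right j 1))))⟩⟩

open Classical in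
lemma schurWord_eq (x : List ℕ+) (c : ℕ+ → ℕ) (hc : IsPartition c) :
    schurWord x c =
      if ∀ j : ℕ+, c (j+1) + alpha j x ≤ c j then some (fun i => c i + x.count i)
      else none := by
  induction x with
  | nil =>
    rw [if_pos]
    · simp [schurWord]
    · intro j; rw [alpha_nil]; simpa using hc.1 j
  | cons a x ih =>
    have hstep : schurWord (a :: x) c = (schurWord x c).bind (addBox a) := rfl
    rw [hstep, ih]
    by_cases hx : ∀ j : ℕ+, c (j+1) + alpha j x ≤ c j
    · rw [if_pos hx]
      set d : ℕ+ → ℕ := fun i => c i + x.count i with hd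
      have hd' : Function.update d a (d a + 1) = fun i => c i + (a :: x).count i := by
        funext i
        by_cases hia : i = a
        · subst hia; simp [Function.update, List.count_cons, d]; omega
        · simp [Function.update, hia, Ne.symm hia, List.count_cons, d]
      have hiff : IsPartition (Function.update d a (d a + 1)) ↔
          ∀ j : ℕ+, c (j+1) + alpha j (a :: x) ≤ c j := by
        rw [hd']
        constructor
        · intro hp j
          have h1 := hp.1 j
          simp only at h1
          have h2 := hx j
          rw [alpha_cons]
          have h3 : c (j+1) + ((a :: x).count (j+1) - (a :: x).count j) ≤ c j := by omega
          omega
        · intro h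
          constructor
          · intro j
            have h1 := h j
            have h2 := count_sub_le_alpha j (a :: x)
            rw [alpha_cons] at h1
            simp only
            omega
          · obtain ⟨N1, hN1⟩ := hc.2
            obtain ⟨N2, hN2⟩ := exists_count_bound (a :: x)
            refine ⟨max N1 N2, fun i hi => ?_⟩
            have := hN1 i (le_trans (le_max_left _ _) hi)
            have := hN2 i (le_trans (le_max_right _ _) hi)
            simp only
            omega
      have hbind : (Option.some d).bind (addBox a) = addBox a d := rfl
      rw [hbind]
      unfold addBox
      by_cases hcond : ∀ j : ℕ+, c (j+1) + alpha j (a :: x) ≤ c j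
      · rw [if_pos hcond, if_pos (hiff.mpr hcond), hd']
      · rw [if_neg hcond, if_neg (fun hp => hcond (hiff.mp hp))]
    · rw [if_neg hx, if_neg]
      · rfl
      · intro hcond
        apply hx
        intro j
        have h1 := hcond j
        have h2 : alpha j x ≤ alpha j (a :: x) := by rw [alpha_cons]; exact le_max_right _ _
        omega

/-- Build a partition with prescribed gaps. -/
lemma exists_gap_partition (g : ℕ+ → ℕ) (N : ℕ+) (hg : ∀ j : ℕ+, N ≤ j → g j = 0) :
    ∃ c : ℕ+ → ℕ, IsPartition c ∧ ∀ j : ℕ+, c j = c (j + 1) + g j := by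
  set G : ℕ → ℕ := fun k => if h : 0 < k then g ⟨k, h⟩ else 0 with hG
  refine ⟨fun j => ∑ k ∈ Finset.Ico (j : ℕ) (N : ℕ), G k, ⟨?_, ⟨N, ?_⟩⟩, ?_⟩
  · intro i
    apply Finset.sum_le_sum_of_subset
    apply Finset.Ico_subset_Ico _ le_rfl
    push_cast
    omega
  · intro i hi
    dsimp only
    rw [Finset.Ico_eq_empty, Finset.sum_empty]
    have := (PNat.coe_le_coe _ _).mpr hi
    omega
  · intro j
    dsimp only
    by_cases hj : (j : ℕ) < (N : ℕ)
    · rw [Finset.sum_eq_sum_Ico_succ_bot hj]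
      have hGj : G (j : ℕ) = g j := by
        rw [hG]
        simp only [j.pos, dif_pos]
        congr
      have hcoe : ((j + 1 : ℕ+) : ℕ) = (j : ℕ) + 1 := by push_cast; ring
      rw [hGj, hcoe, add_comm]
    · have hj' : N ≤ j := (PNat.coe_le_coe _ _).mp (by omega)
      rw [Finset.Ico_eq_empty (by omega), Finset.Ico_eq_empty (by push_cast; omega),
        Finset.sum_empty, hg j hj']
      simp

lemma alpha_le_of_agree (x y : List ℕ+)
    (H : ∀ c : ℕ+ → ℕ, IsPartition c → schurWord x c = schurWord y c) (i : ℕ+) :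
    alpha i x ≤ alpha i y := by
  by_contra hlt
  push_neg at hlt
  obtain ⟨Nx, hNx⟩ := exists_bound x
  obtain ⟨Ny, hNy⟩ := exists_bound y
  set N : ℕ+ := max (max Nx Ny) (i + 1) with hN
  set g : ℕ+ → ℕ := fun j => if j = i then alpha i y else max (alpha j x) (alpha j y) with hg
  have hg0 : ∀ j : ℕ+, N ≤ j → g j = 0 := by
    intro j hj
    have hj1 : Nx ≤ j := le_trans (le_trans (le_max_left _ _) (le_max_left _ _)) hj
    have hj2 : Ny ≤ j := le_trans (le_trans (le_max_right _ _) (le_max_left _ _)) hj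
    have hji : j ≠ i := by
      intro h; subst h
      have h4 : j + 1 ≤ j := le_trans (le_max_right _ _) hj
      have := (PNat.coe_le_coe _ _).mpr h4
      push_cast at this
      omega
    rw [hg]
    simp only [if_neg hji]
    rw [(hNx j hj1).2, (hNy j hj2).2]
    simp
  obtain ⟨c, hc, hgap⟩ := exists_gap_partition g N hg0
  have hy : ∀ j : ℕ+, c (j+1) + alpha j y ≤ c j := by
    intro j
    rw [hgap j]
    by_cases hji : j = i
    · subst hji; simp [hg]
    · simp only [hg, if_neg hji]
      have := le_max_right (alpha j x) (alpha j y)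
      omega
  have hxfail : ¬ ∀ j : ℕ+, c (j+1) + alpha j x ≤ c j := by
    intro hcond
    have h1 := hcond i
    rw [hgap i] at h1
    simp only [hg, if_pos rfl] at h1
    omega
  have := H c hc
  rw [schurWord_eq x c hc, schurWord_eq y c hc, if_neg hxfail, if_pos hy] at this
  exact nomatch this

theorem stmt1 (x y : List ℕ+) :
    (∀ c : ℕ+ → ℕ, IsPartition c → schurWord x c = schurWord y c) ↔
      ((∀ i : ℕ+, x.count i = y.count i) ∧ (∀ i : ℕ+, alpha i x = alpha i y)) := by
  constructor
  · intro H
    constructor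
    · -- counts agree
      obtain ⟨Nx, hNx⟩ := exists_bound x
      obtain ⟨Ny, hNy⟩ := exists_bound y
      set N : ℕ+ := max Nx Ny with hN
      set g : ℕ+ → ℕ := fun j => max (alpha j x) (alpha j y) with hg
      have hg0 : ∀ j : ℕ+, N ≤ j → g j = 0 := by
        intro j hj
        rw [hg]
        simp only
        rw [(hNx j (le_trans (le_max_left _ _) hj)).2,
          (hNy j (le_trans (le_max_right _ _) hj)).2]
        simp
      obtain ⟨c, hc, hgap⟩ := exists_gap_partition g N hg0
      have hx : ∀ j : ℕ+, c (j+1) + alpha j x ≤ c j := by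
        intro j; rw [hgap j]
        have := le_max_left (alpha j x) (alpha j y); simp only [hg]; omega
      have hy : ∀ j : ℕ+, c (j+1) + alpha j y ≤ c j := by
        intro j; rw [hgap j]
        have := le_max_right (alpha j x) (alpha j y); simp only [hg]; omega
      have heq := H c hc
      rw [schurWord_eq x c hc, schurWord_eq y c hc, if_pos hx, if_pos hy] at heq
      intro i
      have := congrFun (Option.some.inj heq) i
      simpa using this
    · intro i
      exact le_antisymm (alpha_le_of_agree x y H i)
        (alpha_le_of_agree y x (fun c hc => (H c hc).symm) i)
  · rintro ⟨h1, h2⟩ c hc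
    have hcond : (∀ j : ℕ+, c (j+1) + alpha j x ≤ c j) ↔
        (∀ j : ℕ+, c (j+1) + alpha j y ≤ c j) := by
      constructor <;> intro h j <;> [rw [← h2 j]; rw [h2 j]] <;> exact h j
    have hval : (fun i => c i + x.count i) = (fun i => c i + y.count i) := by
      funext i; rw [h1 i]
    rw [schurWord_eq x c hc, schurWord_eq y c hc, hval]
    by_cases h : ∀ j : ℕ+, c (j+1) + alpha j x ≤ c j
    · rw [if_pos h, if_pos (hcond.mp h)]
    · rw [if_neg h, if_neg (fun h' => h (hcond.mpr h'))]
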